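/- arXiv:2102.03811 — 13 statements merged into one kernel-verified Lean document; each statement's English description precedes it below -/
import Mathlib

section
/- Let R be a ring and let T be the subring of the 2×2 matrix ring M₂(R) consisting of all upper triangular matrices (matrices whose (2,1)-entry is zero). If a, c ∈ R are quasinilpotent in R and b ∈ R, then the matrix A = !![a, b; 0, c], regarded as an element of T, is quasinilpotent in the ring T; that is, for every upper triangular matrix B ∈ T with A·B = B·A, the element 1 + A·B is a unit of the ring T. -/
/-- An element `a` of a ring is quasinilpotent if `1 + a * x` is a unit
for every `x` commuting with `a`. -/
def IsQuasinilpotent {R : Type*} [Ring R] (a : R) : Prop :=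
  ∀ x : R, a * x = x * a → IsUnit (1 + a * x)

/-- The subring of `M₂(R)` consisting of upper triangular matrices. -/
def upperTri2 (R : Type*) [Ring R] : Subring (Matrix (Fin 2) (Fin 2) R) where
  carrier := {M | M 1 0 = 0}
  zero_mem' := by simp
  one_mem' := by simp [Matrix.one_apply]
  add_mem' := by
    intro A B hA hB
    simp only [Set.mem_setOf_eq] at *
    simp [Matrix.add_apply, hA, hB]
  neg_mem' := by
    intro A hA
    simp only [Set.mem_setOf_eq] at *
    simp [Matrix.neg_apply, hA]
  mul_mem' := by
    intro A B hA hB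
    simp only [Set.mem_setOf_eq] at *
    simp [Matrix.mul_apply, Fin.sum_univ_two, hA, hB]


private lemma tri_mul_inv {R : Type*} [Ring R] (u v : Rˣ) (w : R) :
    !![(u : R), w; 0, (v : R)] * !![(↑u⁻¹ : R), -(↑u⁻¹ * w * ↑v⁻¹); 0, ↑v⁻¹] = 1 := by
  ext i j
  fin_cases i <;> fin_cases j <;>
    simp [Matrix.mul_apply, Fin.sum_univ_two, Matrix.one_apply, mul_assoc]

private lemma tri_inv_mul {R : Type*} [Ring R] (u v : Rˣ) (w : R) :
    !![(↑u⁻¹ : R), -(↑u⁻¹ * w * ↑v⁻¹); 0, ↑v⁻¹] * !![(u : R), w; 0, (v : R)] = 1 := by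
  ext i j
  fin_cases i <;> fin_cases j <;>
    simp [Matrix.mul_apply, Fin.sum_univ_two, Matrix.one_apply, mul_assoc]

theorem stmt0 {R : Type*} [Ring R] (a b c : R)
    (ha : IsQuasinilpotent a) (hc : IsQuasinilpotent c) :
    IsQuasinilpotent
      (⟨!![a, b; 0, c], by show !![a, b; 0, c] 1 0 = 0; simp⟩ : upperTri2 R) := by
  intro B hB
  obtain ⟨B, hB0⟩ := B
  have hB0' : B 1 0 = 0 := hB0
  have hB' : !![a, b; 0, c] * B = B * !![a, b; 0, c] := congrArg Subtype.val hB
  have hx : a * B 0 0 = B 0 0 * a := by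
    have := congrFun (congrFun hB' 0) 0
    simpa [Matrix.mul_apply, Fin.sum_univ_two, hB0'] using this
  have hz : c * B 1 1 = B 1 1 * c := by
    have := congrFun (congrFun hB' 1) 1
    simpa [Matrix.mul_apply, Fin.sum_univ_two, hB0'] using this
  obtain ⟨u, hu⟩ := ha (B 0 0) hx
  obtain ⟨v, hv⟩ := hc (B 1 1) hz
  set w : R := a * B 0 1 + b * B 1 1 with hw
  have key : (1 : Matrix (Fin 2) (Fin 2) R) + !![a, b; 0, c] * B
      = !![(u : R), w; 0, (v : R)] := by
    ext i j
    fin_cases i <;> fin_cases j <;>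
      simp [Matrix.mul_apply, Fin.sum_univ_two, Matrix.one_apply, Matrix.vecMul, dotProduct, hB0', hw, hu, hv]
  refine isUnit_iff_exists.mpr
    ⟨⟨!![(↑u⁻¹ : R), -(↑u⁻¹ * w * ↑v⁻¹); 0, ↑v⁻¹],
      by show !![(↑u⁻¹ : R), -(↑u⁻¹ * w * ↑v⁻¹); 0, ↑v⁻¹] 1 0 = 0; simp⟩, ?_, ?_⟩
  · apply Subtype.ext
    show ((1 : Matrix (Fin 2) (Fin 2) R) + !![a, b; 0, c] * B)
        * !![(↑u⁻¹ : R), -(↑u⁻¹ * w * ↑v⁻¹); 0, ↑v⁻¹] = 1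
    rw [key, tri_mul_inv]
  · apply Subtype.ext
    show !![(↑u⁻¹ : R), -(↑u⁻¹ * w * ↑v⁻¹); 0, ↑v⁻¹]
        * ((1 : Matrix (Fin 2) (Fin 2) R) + !![a, b; 0, c] * B) = 1
    rw [key, tri_inv_mul]
end

section
/- Let R be a ring and let D₂(R) be the ring of 2×2 upper triangular matrices over R with equal diagonal entries; D₂(R) is isomorphic to the trivial square-zero extension TrivSqZeroExt R R, whose elements are pairs (a, b) ∈ R × R with multiplication (a, b)·(a', b') = (a·a', a·b' + b·a'). If a ∈ R is quasinilpotent in R, then for every b ∈ R the element (a, b) of TrivSqZeroExt R R is quasinilpotent in TrivSqZeroExt R R. -/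
theorem stmt1 {R : Type*} [Ring R] (a : R) (ha : IsQuasinilpotent a) (b : R) :
    IsQuasinilpotent
      (TrivSqZeroExt.inl a + TrivSqZeroExt.inr b : TrivSqZeroExt R R) := by
  intro x hx
  rw [TrivSqZeroExt.isUnit_iff_isUnit_fst]
  simp only [TrivSqZeroExt.fst_add, TrivSqZeroExt.fst_one, TrivSqZeroExt.fst_mul,
    TrivSqZeroExt.fst_inl, TrivSqZeroExt.fst_inr, add_zero]
  apply ha
  have := congrArg TrivSqZeroExt.fst hx
  simpa using this
end

section
/- Let S be a commutative ring and R a unital S-algebra, and let Unitization S R denote the Dorroh (ideal) extension of R by S. For every a ∈ R, the element a is quasinilpotent in the ring R if and only if the element inr a = (0, a) is quasinilpotent in the ring Unitization S R. -/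
lemma one_add_inr_mul_one_add_inr {S R : Type*} [CommRing S] [Ring R] [Algebra S R] (p q : R) :
    (1 + (Unitization.inr p : Unitization S R)) * (1 + Unitization.inr q)
      = 1 + Unitization.inr (p + q + p * q) := by
  simp only [mul_add, add_mul, one_mul, mul_one, Unitization.inr_add, Unitization.inr_mul]
  abel

lemma isUnit_one_add_inr {S R : Type*} [CommRing S] [Ring R] [Algebra S R] {m : R}
    (h : IsUnit (1 + m)) : IsUnit (1 + (Unitization.inr m : Unitization S R)) := by
  obtain ⟨u, hu⟩ := h
  refine ⟨⟨1 + Unitization.inr m, 1 + Unitization.inr ((↑u⁻¹ : R) - 1), ?_, ?_⟩, rfl⟩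
  · have h1 : (1 + m) * (↑u⁻¹ : R) = 1 := by rw [← hu]; exact u.mul_inv
    rw [add_mul, one_mul] at h1
    have key : m + ((↑u⁻¹ : R) - 1) + m * ((↑u⁻¹ : R) - 1) = 0 := by
      rw [mul_sub, mul_one]
      have h2 : m + ((↑u⁻¹ : R) - 1) + (m * ↑u⁻¹ - m) = (↑u⁻¹ + m * ↑u⁻¹) - 1 := by abel
      rw [h2, h1, sub_self]
    rw [one_add_inr_mul_one_add_inr, key, Unitization.inr_zero, add_zero]
  · have h1 : (↑u⁻¹ : R) * (1 + m) = 1 := by rw [← hu]; exact u.inv_mul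
    rw [mul_add, mul_one] at h1
    have key : ((↑u⁻¹ : R) - 1) + m + ((↑u⁻¹ : R) - 1) * m = 0 := by
      rw [sub_mul, one_mul]
      have h2 : ((↑u⁻¹ : R) - 1) + m + (↑u⁻¹ * m - m) = (↑u⁻¹ + ↑u⁻¹ * m) - 1 := by abel
      rw [h2, h1, sub_self]
    rw [one_add_inr_mul_one_add_inr, key, Unitization.inr_zero, add_zero]

theorem stmt4 {S R : Type*} [CommRing S] [Ring R] [Algebra S R] (a : R) :
    IsQuasinilpotent a ↔
      IsQuasinilpotent (Unitization.inr a : Unitization S R) := by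
  constructor
  · intro h x hx
    obtain ⟨s, r, rfl⟩ : ∃ s r, x = Unitization.inl s + Unitization.inr r :=
      ⟨x.fst, x.snd, (Unitization.inl_fst_add_inr_snd_eq x).symm⟩
    have hc : a * r = r * a := Unitization.inr_injective (R := S) (by
      simpa [mul_add, add_mul, Unitization.inr_mul_inl, Unitization.inl_mul_inr,
        ← Unitization.inr_mul] using hx)
    have hc' : a * (algebraMap S R s + r) = (algebraMap S R s + r) * a := by
      rw [mul_add, add_mul, hc, Algebra.commutes]
    have hu := h (algebraMap S R s + r) hc'
    have heq : (Unitization.inr a : Unitization S R) * (Unitization.inl s + Unitization.inr r)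
        = Unitization.inr (a * (algebraMap S R s + r)) := by
      simp [mul_add, Unitization.inr_mul_inl, ← Unitization.inr_mul,
        Algebra.smul_def, Algebra.commutes]
    rw [heq]
    exact isUnit_one_add_inr hu
  · intro h x hx
    have := h (Unitization.inr x) (by rw [← Unitization.inr_mul, ← Unitization.inr_mul, hx])
    rw [← Unitization.inr_mul] at this
    let φ : Unitization S R →ₐ[S] R := Unitization.lift ((AlgHom.id S R).toNonUnitalAlgHom)
    have := this.map φ
    simp [φ] at this
    exact this
end

section
/- Let S be a commutative ring and R a unital S-algebra, and let Unitization S R denote the Dorroh (ideal) extension of R by S. Let s ∈ S be quasinilpotent in S. Then the element inl s = (s, 0) is quasinilpotent in Unitization S R if and only if for every a ∈ R and every b ∈ S there exist u ∈ R and v ∈ S such that (algebraMap S R s · (a + algebraMap S R b) + 1) · (u + algebraMap S R v) = 1 in R and (1 + s·b)·v = 1 in S. -/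
section aux

variable {S R : Type*} [CommRing S] [Ring R] [Algebra S R]

lemma prod_isUnit_iff {M N : Type*} [Monoid M] [Monoid N] (p : M × N) :
    IsUnit p ↔ IsUnit p.1 ∧ IsUnit p.2 := by
  constructor
  · intro h
    exact ⟨h.map (MonoidHom.fst M N), h.map (MonoidHom.snd M N)⟩
  · rintro ⟨⟨u, hu⟩, ⟨v, hv⟩⟩
    refine ⟨⟨(u.val, v.val), (u.inv, v.inv), ?_, ?_⟩, ?_⟩
    · exact Prod.ext u.val_inv v.val_inv
    · exact Prod.ext u.inv_val v.inv_val
    · exact Prod.ext hu hv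

/-- The second component of the canonical iso `Unitization S R ≃ S × R`. -/
noncomputable def myPhi : Unitization S R →ₐ[S] R :=
  ((AlgHom.id S R).toNonUnitalAlgHom).toAlgHom

lemma myPhi_apply (x : Unitization S R) : myPhi x = algebraMap S R x.fst + x.snd := rfl

noncomputable def myPsi : Unitization S R →+* S × R :=
  (Unitization.fstHom S R).toRingHom.prod (myPhi (S := S) (R := R)).toRingHom

lemma myPsi_apply (x : Unitization S R) :
    myPsi x = (x.fst, algebraMap S R x.fst + x.snd) := rfl

lemma myPsi_bijective : Function.Bijective (myPsi (S := S) (R := R)) := by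
  constructor
  · intro x y hxy
    rw [myPsi_apply, myPsi_apply, Prod.ext_iff] at hxy
    obtain ⟨h1, h2⟩ := hxy
    simp only at h1 h2
    rw [h1] at h2
    exact Unitization.ext h1 (by exact add_left_cancel h2)
  · rintro ⟨b, r⟩
    refine ⟨Unitization.inl b + Unitization.inr (r - algebraMap S R b), ?_⟩
    rw [myPsi_apply]
    refine Prod.ext ?_ ?_
    · simp only [Unitization.fst_add, Unitization.fst_inl, Unitization.fst_inr, add_zero]
    · simp only [Unitization.snd_add, Unitization.snd_inl, Unitization.snd_inr,
        Unitization.fst_add, Unitization.fst_inl, Unitization.fst_inr, add_zero, zero_add]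
      abel

lemma unitization_isUnit_iff (x : Unitization S R) :
    IsUnit x ↔ IsUnit x.fst ∧ IsUnit (algebraMap S R x.fst + x.snd) := by
  have key : IsUnit x ↔ IsUnit (myPsi x) := by
    constructor
    · intro h; exact h.map myPsi
    · intro h
      let e : Unitization S R ≃+* S × R := RingEquiv.ofBijective myPsi myPsi_bijective
      have : IsUnit (e.symm (myPsi x)) := h.map e.symm
      have he : e.symm (myPsi x) = x := e.injective (by simp [e, RingEquiv.ofBijective]; rfl)
      rwa [he] at this
  rw [key, myPsi_apply, prod_isUnit_iff]

end aux

theorem stmt6 {S R : Type*} [CommRing S] [Ring R] [Algebra S R] (s : S)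
    (hs : IsQuasinilpotent s) :
    IsQuasinilpotent (Unitization.inl s : Unitization S R) ↔
      ∀ (a : R) (b : S), ∃ (u : R) (v : S),
        (algebraMap S R s * (a + algebraMap S R b) + 1) * (u + algebraMap S R v) = 1 ∧
        (1 + s * b) * v = 1 := by
  constructor
  · intro H a b
    set x : Unitization S R := Unitization.inl b + Unitization.inr a with hx
    have hcomm : (Unitization.inl s : Unitization S R) * x = x * Unitization.inl s := by
      refine Unitization.ext ?_ ?_
      · simp [Unitization.fst_mul, mul_comm]
      · simp [Unitization.snd_mul]
    have hu := H x hcomm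
    rw [unitization_isUnit_iff] at hu
    obtain ⟨h1, h2⟩ := hu
    have hfst : (1 + Unitization.inl s * x).fst = 1 + s * b := by simp [hx]
    have hsnd : (1 + Unitization.inl s * x).snd = s • a := by simp [hx]
    rw [hfst] at h1
    rw [hfst, hsnd] at h2
    obtain ⟨v, hv⟩ := h1.exists_right_inv
    obtain ⟨w, hw⟩ := h2.exists_right_inv
    refine ⟨w - algebraMap S R v, v, ?_, hv⟩
    have : algebraMap S R (1 + s * b) + s • a
        = algebraMap S R s * (a + algebraMap S R b) + 1 := by
      rw [map_add, map_one, map_mul, Algebra.smul_def]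
      noncomm_ring
    rw [this] at hw
    rw [sub_add_cancel]
    exact hw
  · intro H
    -- first: every `1 + algebraMap s * r` is a unit in `R`
    have key : ∀ r : R, IsUnit (1 + algebraMap S R s * r) := by
      intro r
      obtain ⟨u, v, huv, -⟩ := H r 0
      simp only [map_zero, add_zero] at huv
      set w : R := u + algebraMap S R v with hwdef
      set t : R := algebraMap S R s * r + 1 with htdef
      have htw : t * w = 1 := huv
      -- w = 1 - algebraMap s * (r * w)
      have hw_form : w = algebraMap S R s * (-(r * w)) + 1 := by
        have h1 : algebraMap S R s * (r * w) + w = 1 := by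
          rw [← htw, htdef]; noncomm_ring
        rw [mul_neg, ← h1]; abel
      obtain ⟨u', v', hu'v', -⟩ := H (-(r * w)) 0
      simp only [map_zero, add_zero] at hu'v'
      rw [← hw_form] at hu'v'
      -- hu'v' : w * (u' + algebraMap S R v') = 1
      have hz : w * t = 1 := by
        have : u' + algebraMap S R v' = t := by
          calc u' + algebraMap S R v' = 1 * (u' + algebraMap S R v') := by rw [one_mul]
            _ = (t * w) * (u' + algebraMap S R v') := by rw [htw]
            _ = t * (w * (u' + algebraMap S R v')) := by rw [mul_assoc]
            _ = t := by rw [hu'v', mul_one]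
        rw [← this]; exact hu'v'
      have : IsUnit t := ⟨⟨t, w, htw, hz⟩, rfl⟩
      rwa [htdef, add_comm] at this
    intro x _
    rw [unitization_isUnit_iff]
    constructor
    · have hfst : (1 + Unitization.inl s * x).fst = 1 + s * x.fst := by simp
      rw [hfst]
      exact hs x.fst (mul_comm _ _)
    · have hfst : (1 + Unitization.inl s * x).fst = 1 + s * x.fst := by simp
      have hsnd : (1 + Unitization.inl s * x).snd = s • x.snd := by simp
      rw [hfst, hsnd]
      have : algebraMap S R (1 + s * x.fst) + s • x.snd
          = 1 + algebraMap S R s * (x.snd + algebraMap S R x.fst) := by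
        rw [map_add, map_one, map_mul, Algebra.smul_def]
        noncomm_ring
      rw [this]
      exact key _
end

section
/- Let (R_i)_{i ∈ I} be a family of rings indexed by a set I and let R = ∏_{i ∈ I} R_i be their direct product ring. Then R is right qnil-duo if and only if R_i is right qnil-duo for every i ∈ I. -/
/-- A ring is right qnil-duo if `R^qnil · a ⊆ a · R^qnil` for every `a`. -/
def IsRightQnilDuo (R : Type*) [Ring R] : Prop :=
  ∀ a b : R, IsQuasinilpotent b → ∃ c : R, IsQuasinilpotent c ∧ b * a = a * c

lemma pi_isUnit_iff {I : Type*} {M : I → Type*} [∀ i, Monoid (M i)] (f : ∀ i, M i) :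
    IsUnit f ↔ ∀ i, IsUnit (f i) := by
  constructor
  · rintro ⟨u, rfl⟩ i
    exact ⟨⟨u.val i, u.inv i, congrFun u.val_inv i, congrFun u.inv_val i⟩, rfl⟩
  · intro h
    refine ⟨⟨f, fun i => ↑(h i).unit⁻¹, ?_, ?_⟩, rfl⟩ <;> funext i <;> simp

lemma pi_qnil_iff {I : Type*} {R : I → Type*} [∀ i, Ring (R i)] (a : ∀ i, R i) :
    IsQuasinilpotent a ↔ ∀ i, IsQuasinilpotent (a i) := by
  classical
  constructor
  · intro h i x hx
    have comm : a * Function.update (0 : ∀ j, R j) i x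
        = Function.update (0 : ∀ j, R j) i x * a := by
      funext j
      by_cases hj : j = i
      · subst hj; simpa using hx
      · simp [Function.update_of_ne hj]
    have hu := h _ comm
    rw [pi_isUnit_iff] at hu
    simpa using hu i
  · intro h x hx
    rw [pi_isUnit_iff]
    intro i
    have hcomm : a i * x i = x i * a i := by
      have := congrFun hx i; simpa using this
    simpa using h i (x i) hcomm

theorem stmt9 {I : Type*} (R : I → Type*) [∀ i, Ring (R i)] :
    IsRightQnilDuo (∀ i, R i) ↔ ∀ i, IsRightQnilDuo (R i) := by
  classical
  constructor
  · intro h i a b hb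
    set A : ∀ j, R j := Function.update (0 : ∀ j, R j) i a with hA
    set B : ∀ j, R j := Function.update (0 : ∀ j, R j) i b with hB
    have hBq : IsQuasinilpotent B := by
      rw [pi_qnil_iff]
      intro j
      by_cases hj : j = i
      · subst hj; simpa [hB] using hb
      · intro x hx
        simp [hB, Function.update_of_ne hj]
    obtain ⟨c, hcq, heq⟩ := h A B hBq
    refine ⟨c i, (pi_qnil_iff c).1 hcq i, ?_⟩
    have := congrFun heq i
    simpa [hA, hB] using this
  · intro h a b hb
    choose c hc1 hc2 using fun i => h i (a i) (b i) ((pi_qnil_iff b).1 hb i)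
    exact ⟨c, (pi_qnil_iff c).2 hc1, funext fun i => hc2 i⟩
end

section
/- Every right qnil-duo ring is abelian; that is, if R is a right qnil-duo ring, then every idempotent e ∈ R (e² = e) is central: e·x = x·e for all x ∈ R. -/
/-- Square-zero elements are quasinilpotent. -/
lemma sq_zero_qnil {R : Type*} [Ring R] (a : R) (ha : a * a = 0) :
    IsQuasinilpotent a := by
  intro x hx
  have key : a * x * (a * x) = 0 := by
    calc a * x * (a * x) = a * (x * a) * x := by noncomm_ring
      _ = a * (a * x) * x := by rw [hx]
      _ = (a * a) * (x * x) := by noncomm_ring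
      _ = 0 := by rw [ha, zero_mul]
  refine isUnit_iff_exists.mpr ⟨1 - a * x, ?_, ?_⟩
  · have : (1 + a * x) * (1 - a * x) = 1 - a * x * (a * x) := by noncomm_ring
    rw [this, key, sub_zero]
  · have : (1 - a * x) * (1 + a * x) = 1 - a * x * (a * x) := by noncomm_ring
    rw [this, key, sub_zero]

theorem stmt11 {R : Type*} [Ring R] (h : IsRightQnilDuo R)
    (e : R) (he : e * e = e) (x : R) : e * x = x * e := by
  have hfe : (1 - e) * e = 0 := by rw [sub_mul, one_mul, he, sub_self]
  have hef : e * (1 - e) = 0 := by rw [mul_sub, mul_one, he, sub_self]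
  have hff : (1 - e) * (1 - e) = 1 - e := by
    rw [mul_sub, mul_one, hfe, sub_zero]
  have hb : (e * x * (1 - e)) * (e * x * (1 - e)) = 0 := by
    calc (e * x * (1 - e)) * (e * x * (1 - e))
        = e * x * ((1 - e) * e) * (x * (1 - e)) := by noncomm_ring
      _ = 0 := by rw [hfe, mul_zero, zero_mul]
  have hb' : ((1 - e) * x * e) * ((1 - e) * x * e) = 0 := by
    calc ((1 - e) * x * e) * ((1 - e) * x * e)
        = (1 - e) * x * (e * (1 - e)) * (x * e) := by noncomm_ring
      _ = 0 := by rw [hef, mul_zero, zero_mul]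
  obtain ⟨c, -, hc⟩ := h (1 - e) (e * x * (1 - e)) (sq_zero_qnil _ hb)
  have h1 : e * x * (1 - e) = 0 := by
    rw [mul_assoc, hff] at hc
    calc e * x * (1 - e) = e * (e * x * (1 - e)) := by
          rw [← mul_assoc, ← mul_assoc, he]
      _ = e * ((1 - e) * c) := by rw [hc]
      _ = (e * (1 - e)) * c := by rw [mul_assoc]
      _ = 0 := by rw [hef, zero_mul]
  obtain ⟨c', -, hc'⟩ := h e ((1 - e) * x * e) (sq_zero_qnil _ hb')
  have h2 : (1 - e) * x * e = 0 := by
    rw [mul_assoc, he] at hc'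
    calc (1 - e) * x * e = (1 - e) * ((1 - e) * x * e) := by
          rw [← mul_assoc, ← mul_assoc, hff]
      _ = (1 - e) * (e * c') := by rw [hc']
      _ = ((1 - e) * e) * c' := by rw [mul_assoc]
      _ = 0 := by rw [hfe, zero_mul]
  have e1 : e * x = e * x * e := by
    have : e * x * (1 - e) = e * x - e * x * e := by noncomm_ring
    rw [this, sub_eq_zero] at h1
    exact h1
  have e2 : x * e = e * (x * e) := by
    have : (1 - e) * x * e = x * e - e * (x * e) := by noncomm_ring
    rw [this, sub_eq_zero] at h2
    exact h2
  rw [e1, e2, mul_assoc]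
end

section
/- Every right qnil-duo ring is directly finite: if R is a right qnil-duo ring and a, b ∈ R satisfy a·b = 1, then b·a = 1. -/
theorem stmt12 {R : Type*} [Ring R] (h : IsRightQnilDuo R)
    (a b : R) (hab : a * b = 1) : b * a = 1 := by
  set e : R := 1 - b * a with he
  have hae : a * e = 0 := by
    simp only [he, mul_sub, mul_one, ← mul_assoc, hab, one_mul, sub_self]
  set q : R := e * a with hq
  have hqq : q * q = 0 := by
    calc q * q = e * (a * e) * a := by simp [hq, mul_assoc]
    _ = 0 := by rw [hae]; simp
  have hqnil : IsQuasinilpotent q := by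
    intro x hx
    have hsq : (q * x) * (q * x) = 0 := by
      calc (q * x) * (q * x) = q * (x * q) * x := by noncomm_ring
      _ = q * (q * x) * x := by rw [← hx]
      _ = (q * q) * (x * x) := by noncomm_ring
      _ = 0 := by rw [hqq]; simp
    refine ⟨⟨1 + q * x, 1 - q * x, ?_, ?_⟩, rfl⟩
    · have : (1 + q * x) * (1 - q * x) = 1 - (q * x) * (q * x) := by noncomm_ring
      rw [this, hsq, sub_zero]
    · have : (1 - q * x) * (1 + q * x) = 1 - (q * x) * (q * x) := by noncomm_ring
      rw [this, hsq, sub_zero]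
  obtain ⟨c, _, hcb⟩ := h b q hqnil
  have hqb : q * b = e := by
    simp [hq, mul_assoc, hab]
  have hc0 : c = 0 := by
    have : a * (b * c) = a * e := by rw [← hcb, hqb]
    rw [← mul_assoc, hab, one_mul, hae] at this
    exact this
  have he0 : e = 0 := by rw [← hqb, hcb, hc0, mul_zero]
  have := he0
  rw [he, sub_eq_zero] at this
  exact this.symm
end

section
/- Let R be a nontrivial ring and let n ≥ 2 be an integer. Then the full matrix ring M_n(R) is not a right qnil-duo ring (and also not a left qnil-duo ring). -/
/-- A ring is left qnil-duo if `a · R^qnil ⊆ R^qnil · a` for every `a`. -/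
def IsLeftQnilDuo (R : Type*) [Ring R] : Prop :=
  ∀ a b : R, IsQuasinilpotent b → ∃ c : R, IsQuasinilpotent c ∧ a * b = c * a

/-- An element of square zero is quasinilpotent. -/
lemma sq_zero_quasinilpotent {S : Type*} [Ring S] {b : S} (hb : b * b = 0) :
    IsQuasinilpotent b := by
  intro x hx
  have hsq : (b * x) * (b * x) = 0 := by
    calc (b * x) * (b * x) = b * (x * b) * x := by noncomm_ring
    _ = b * (b * x) * x := by rw [← hx]
    _ = (b * b) * (x * x) := by noncomm_ring
    _ = 0 := by rw [hb, zero_mul]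
  exact ⟨⟨1 + b * x, 1 - b * x,
    by rw [mul_one_sub, add_mul, one_mul, hsq]; noncomm_ring,
    by rw [one_sub_mul, mul_add, mul_one, hsq]; noncomm_ring⟩, rfl⟩

theorem stmt13 {R : Type*} [Ring R] [Nontrivial R] (n : ℕ) (hn : 2 ≤ n) :
    ¬ IsRightQnilDuo (Matrix (Fin n) (Fin n) R) ∧
      ¬ IsLeftQnilDuo (Matrix (Fin n) (Fin n) R) := by
  set i0 : Fin n := ⟨0, by omega⟩
  set i1 : Fin n := ⟨1, by omega⟩
  have hne : i0 ≠ i1 := by simp [i0, i1, Fin.ext_iff]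
  set b : Matrix (Fin n) (Fin n) R := Matrix.single i0 i1 1 with hbdef
  have hbq : IsQuasinilpotent b := by
    apply sq_zero_quasinilpotent
    rw [hbdef]
    exact Matrix.single_mul_single_of_ne (c := (1 : R)) i0 i1 i0 hne.symm 1
  constructor
  · intro h
    obtain ⟨c, -, hc⟩ := h (Matrix.single i1 i0 1) b hbq
    rw [hbdef, Matrix.single_mul_single_same] at hc
    have h0 := congrFun (congrFun hc i0) i0
    simp [hne] at h0
  · intro h
    obtain ⟨c, -, hc⟩ := h (Matrix.single i1 i0 1) b hbq
    rw [hbdef, Matrix.single_mul_single_same] at hc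
    have h0 := congrFun (congrFun hc i1) i1
    simp [Ne.symm hne] at h0
end

section
/- Let R be a local ring (a nontrivial ring in which for every a ∈ R either a or 1 − a is a unit) such that the product of any two quasinilpotent elements of R is zero (i.e., (R^qnil)² = 0). Then R is right qnil-duo and left qnil-duo. -/
section Aux

variable {R : Type*} [Ring R] [Nontrivial R]

/-- In a local ring, a right-invertible element is a unit. -/
lemma aux_unit_of_right_inv (hlocal : ∀ a : R, IsUnit a ∨ IsUnit (1 - a))
    {a v : R} (hv : a * v = 1) : IsUnit a := by
  have hid : (v * a) * (v * a) = v * a := by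
    calc (v * a) * (v * a) = v * (a * v) * a := by noncomm_ring
    _ = v * a := by rw [hv, mul_one]
  rcases hlocal (v * a) with h | h
  · obtain ⟨u, hu⟩ := h
    have h1 : v * a = 1 := by
      calc v * a = (↑u⁻¹ * u) * (v * a) := by rw [u.inv_mul, one_mul]
      _ = ↑u⁻¹ * ((v*a) * (v*a)) := by rw [← hu]; noncomm_ring
      _ = ↑u⁻¹ * (v * a) := by rw [hid]
      _ = ↑u⁻¹ * ↑u := by rw [hu]
      _ = 1 := u.inv_mul
    exact ⟨⟨a, v, hv, h1⟩, rfl⟩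
  · obtain ⟨u, hu⟩ := h
    have h0 : (1 - v * a) * (v * a) = 0 := by
      rw [sub_mul, one_mul, hid, sub_self]
    have hva : v * a = 0 := by
      have := congrArg (fun t => (↑u⁻¹ : R) * t) (hu ▸ h0)
      simpa [← mul_assoc, u.inv_mul] using this
    have : a = 0 := by
      calc a = (a * v) * a := by rw [hv, one_mul]
      _ = a * (v * a) := by rw [mul_assoc]
      _ = 0 := by rw [hva, mul_zero]
    exact absurd (this ▸ hv) (by simp)

lemma aux_nonunit_qnil (hlocal : ∀ a : R, IsUnit a ∨ IsUnit (1 - a))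
    {a : R} (ha : ¬ IsUnit a) : IsQuasinilpotent a := by
  intro x _
  have hax : ¬ IsUnit (a * x) := by
    intro h
    obtain ⟨u, hu⟩ := h
    have : a * (x * ↑u⁻¹) = 1 := by rw [← mul_assoc, ← hu, u.mul_inv]
    exact ha (aux_unit_of_right_inv hlocal this)
  rcases hlocal (-(a * x)) with h | h
  · exact absurd (by simpa using h.neg) hax
  · simpa [sub_neg_eq_add] using h

lemma aux_qnil_not_unit {b : R} (hb : IsQuasinilpotent b) : ¬ IsUnit b := by
  rintro ⟨u, rfl⟩
  have hc : (u : R) * (-(↑u⁻¹ : R)) = (-(↑u⁻¹ : R)) * u := by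
    simp [u.mul_inv, u.inv_mul]
  have := hb _ hc
  rw [show (u : R) * (-(↑u⁻¹ : R)) = -1 by simp [u.mul_inv]] at this
  simp at this

end Aux

theorem stmt14 {R : Type*} [Ring R] [Nontrivial R]
    (hlocal : ∀ a : R, IsUnit a ∨ IsUnit (1 - a))
    (hsq : ∀ a b : R, IsQuasinilpotent a → IsQuasinilpotent b → a * b = 0) :
    IsRightQnilDuo R ∧ IsLeftQnilDuo R := by
  constructor
  · intro a b hb
    by_cases ha : IsUnit a
    · obtain ⟨u, rfl⟩ := ha
      refine ⟨↑u⁻¹ * b * ↑u, ?_, by rw [← mul_assoc, ← mul_assoc, u.mul_inv, one_mul]⟩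
      apply aux_nonunit_qnil hlocal
      intro h
      exact aux_qnil_not_unit hb (by
        have : (b : R) = ↑u * (↑u⁻¹ * b * ↑u) * ↑u⁻¹ := by
          rw [mul_assoc, mul_assoc, u.mul_inv, mul_one, ← mul_assoc, u.mul_inv, one_mul]
        rw [this]
        exact (u.isUnit.mul h).mul u⁻¹.isUnit)
    · have ha' := aux_nonunit_qnil hlocal ha
      exact ⟨0, aux_nonunit_qnil hlocal (by simp), by rw [hsq b a hb ha', mul_zero]⟩
  · intro a b hb
    by_cases ha : IsUnit a
    · obtain ⟨u, rfl⟩ := ha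
      refine ⟨↑u * b * ↑u⁻¹, ?_, by rw [mul_assoc, u.inv_mul, mul_one]⟩
      apply aux_nonunit_qnil hlocal
      intro h
      exact aux_qnil_not_unit hb (by
        have : (b : R) = ↑u⁻¹ * (↑u * b * ↑u⁻¹) * ↑u := by
          rw [mul_assoc, mul_assoc, u.inv_mul, mul_one, ← mul_assoc, u.inv_mul, one_mul]
        rw [this]
        exact (u⁻¹.isUnit.mul h).mul u.isUnit)
    · have ha' := aux_nonunit_qnil hlocal ha
      exact ⟨0, aux_nonunit_qnil hlocal (by simp), by rw [hsq a b ha' hb, zero_mul]⟩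
end

section
/- Let R be a domain (a nontrivial ring with no nonzero zero divisors) and let D₂(R) be the ring of 2×2 upper triangular matrices over R with equal diagonal entries, realized as the trivial square-zero extension TrivSqZeroExt R R with multiplication (a, b)·(a', b') = (a·a', a·b' + b·a'). If D₂(R) is a right qnil-duo ring, then R is a right qnil-duo ring. -/
theorem stmt15 {R : Type*} [Ring R] [IsDomain R]
    (h : IsRightQnilDuo (TrivSqZeroExt R R)) : IsRightQnilDuo R := by
  intro a b hb
  rcases eq_or_ne a 0 with ha | ha
  · exact ⟨0, fun x _ => by simpa using isUnit_one, by simp [ha]⟩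
  · have hB : IsQuasinilpotent (TrivSqZeroExt.inl b : TrivSqZeroExt R R) := by
      intro X hX
      have h1 : b * X.fst = X.fst * b := by
        have := congrArg TrivSqZeroExt.fst hX
        simpa using this
      have h2 := hb X.fst h1
      rw [TrivSqZeroExt.isUnit_iff_isUnit_fst]
      simpa using h2
    obtain ⟨C, hC, hmul⟩ := h (TrivSqZeroExt.inl a) (TrivSqZeroExt.inl b) hB
    have hfst : b * a = a * C.fst := by
      have := congrArg TrivSqZeroExt.fst hmul
      simpa using this
    have hsnd : a * C.snd = 0 := by
      have := congrArg TrivSqZeroExt.snd hmul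
      simpa using this
    have hc2 : C.snd = 0 := by
      rcases mul_eq_zero.mp hsnd with h' | h'
      · exact absurd h' ha
      · exact h'
    refine ⟨C.fst, ?_, hfst⟩
    intro x hx
    have hXC : C * TrivSqZeroExt.inl x = TrivSqZeroExt.inl x * C := by
      ext
      · simpa using hx
      · simp [hc2]
    have hu := hC (TrivSqZeroExt.inl x) hXC
    rw [TrivSqZeroExt.isUnit_iff_isUnit_fst] at hu
    simpa using hu
end

section
/- Let R be a right qnil-duo ring that is von Neumann regular (for every a ∈ R there exists b ∈ R with a = a·b·a). Then R is strongly regular: for every a ∈ R there exists b ∈ R with a = a²·b. -/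
theorem stmt16 {R : Type*} [Ring R] (h : IsRightQnilDuo R)
    (hreg : ∀ a : R, ∃ b : R, a = a * b * a) :
    ∀ a : R, ∃ b : R, a = a ^ 2 * b := by
  -- Step 1: R is reduced (square-zero elements vanish)
  have hred : ∀ n : R, n * n = 0 → n = 0 := by
    intro n hn
    -- square-zero elements are quasinilpotent
    have hq : IsQuasinilpotent n := by
      intro x hx
      have h0 : (n * x) * (n * x) = 0 := by
        calc (n * x) * (n * x) = n * ((x * n) * x) := by
              rw [mul_assoc, ← mul_assoc x n x]
          _ = n * ((n * x) * x) := by rw [← hx]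
          _ = (n * n) * (x * x) := by rw [mul_assoc n x x, ← mul_assoc]
          _ = 0 := by rw [hn, zero_mul]
      refine ⟨⟨1 + n * x, 1 - n * x, ?_, ?_⟩, rfl⟩
      · have e1 : (1 + n * x) * (1 - n * x) = 1 - (n * x) * (n * x) := by
          noncomm_ring
        rw [e1, h0, sub_zero]
      · have e1 : (1 - n * x) * (1 + n * x) = 1 - (n * x) * (n * x) := by
          noncomm_ring
        rw [e1, h0, sub_zero]
    obtain ⟨b, hb⟩ := hreg n
    obtain ⟨c, _, hc⟩ := h (b * n) n hq
    -- n * (b * n) = n, so n = (b*n) * c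
    have hne : n * (b * n) = n := by rw [← mul_assoc, ← hb]
    have hnc : n = (b * n) * c := by rw [← hc, hne]
    have hee : (b * n) * (b * n) = b * n := by
      rw [mul_assoc b n (b * n), ← mul_assoc n b n, ← hb]
    have hen : (b * n) * n = 0 := by rw [mul_assoc, hn, mul_zero]
    calc n = (b * n) * c := hnc
      _ = (b * n) * ((b * n) * c) := by rw [← mul_assoc, hee]
      _ = (b * n) * n := by rw [← hnc]
      _ = 0 := hen
  -- Step 2: reduced + regular ⇒ strongly regular
  intro a
  obtain ⟨b, hb⟩ := hreg a
  have h2 : (1 - a * b) * a = 0 := by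
    rw [sub_mul, one_mul, mul_assoc, ← mul_assoc, ← hb, sub_self]
  have h3 : (a * (1 - a * b)) * (a * (1 - a * b)) = 0 := by
    rw [mul_assoc a (1 - a * b) (a * (1 - a * b)), ← mul_assoc (1 - a * b) a (1 - a * b),
      h2, zero_mul, mul_zero]
  have h4 : a * (1 - a * b) = 0 := hred _ h3
  refine ⟨b, ?_⟩
  rw [mul_sub, mul_one, sub_eq_zero] at h4
  calc a = a * (a * b) := h4
    _ = a ^ 2 * b := by rw [pow_two, mul_assoc]
end

section
/- Let S be a commutative ring and R a unital S-algebra, and let Unitization S R denote the Dorroh (ideal) extension of R by S. If the ring Unitization S R is right qnil-duo, then R is right qnil-duo. -/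
lemma aux_mul_expand {S R : Type*} [CommRing S] [Ring R] [Algebra S R] (y z : R) :
    ((1 : Unitization S R) + ↑y) * (1 + ↑z) = 1 + ↑(y + z + y * z) := by
  simp only [mul_add, add_mul, one_mul, mul_one, ← Unitization.inr_mul,
    Unitization.inr_add]
  abel

lemma aux_unit {S R : Type*} [CommRing S] [Ring R] [Algebra S R] (y : R)
    (hy : IsUnit (1 + y)) : IsUnit (1 + (y : Unitization S R)) := by
  obtain ⟨u, hu⟩ := hy
  refine isUnit_iff_exists.mpr ⟨1 + (((u⁻¹ : Rˣ) : R) - 1 : R), ?_, ?_⟩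
  · rw [aux_mul_expand]
    have : y + (((u⁻¹ : Rˣ) : R) - 1) + y * (((u⁻¹ : Rˣ) : R) - 1)
        = (1 + y) * ((u⁻¹ : Rˣ) : R) - 1 := by noncomm_ring
    rw [this, ← hu, Units.mul_inv, sub_self, Unitization.inr_zero, add_zero]
  · rw [aux_mul_expand]
    have : (((u⁻¹ : Rˣ) : R) - 1) + y + (((u⁻¹ : Rˣ) : R) - 1) * y
        = ((u⁻¹ : Rˣ) : R) * (1 + y) - 1 := by noncomm_ring
    rw [this, ← hu, Units.inv_mul, sub_self, Unitization.inr_zero, add_zero]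

theorem stmt17 {S R : Type*} [CommRing S] [Ring R] [Algebra S R]
    (h : IsRightQnilDuo (Unitization S R)) : IsRightQnilDuo R := by
  intro a b hb
  have hb' : IsQuasinilpotent ((b : Unitization S R)) := by
    intro x hx
    have hcomm : b * x.snd = x.snd * b := by
      have := congrArg (fun z : Unitization S R => z.snd) hx
      simpa [Unitization.snd_mul] using this
    set y : R := algebraMap S R x.fst + x.snd with hy
    have hyc : b * y = y * b := by
      rw [hy, mul_add, add_mul, hcomm, Algebra.commutes]
    have hby : (↑b : Unitization S R) * x = ↑(b * y) := by
      apply Unitization.ext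
      · simp [Unitization.fst_mul]
      · simp only [Unitization.snd_mul, Unitization.snd_inr, Unitization.fst_inr,
          zero_smul, zero_add, hy, mul_add]
        rw [Algebra.smul_def, Algebra.commutes]
    rw [hby]
    exact aux_unit _ (hb y hyc)
  obtain ⟨c', hc', hbc⟩ := h (↑a) (↑b) hb'
  let φ : Unitization S R →ₐ[S] R :=
    Unitization.lift ((AlgHom.id S R : R →ₐ[S] R) : R →ₙₐ[S] R)
  have hφr : ∀ r : R, φ ↑r = r := by
    intro r
    simp only [φ, Unitization.lift_apply, NonUnitalAlgHom.toAlgHom_apply, Unitization.fst_inr, map_zero,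
      Unitization.snd_inr, zero_add]
    rfl
  have hφ : ∀ z : Unitization S R, φ z = algebraMap S R z.fst + z.snd := by
    intro z
    simp only [φ, Unitization.lift_apply, NonUnitalAlgHom.toAlgHom_apply]
    rfl
  refine ⟨φ c', ?_, ?_⟩
  · intro x hx
    have hsnd : c'.snd * x = x * c'.snd := by
      rw [hφ c'] at hx
      rw [add_mul, mul_add, Algebra.commutes] at hx
      exact add_left_cancel hx
    have hcx : c' * ↑x = ↑x * c' := by
      apply Unitization.ext
      · simp [Unitization.fst_mul]
      · simp [Unitization.snd_mul, hsnd]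
    have h2 := (hc' (↑x) hcx).map φ
    rw [map_add, map_one, map_mul, hφr] at h2
    exact h2
  · have := congrArg φ hbc
    rw [map_mul, map_mul, hφr, hφr] at this
    exact this
end

section
/- Let R be a ring and let s, t ∈ R be central units of R. Let H_{(s,t)}(R) be the subring of the 3×3 matrix ring M₃(R) consisting of all matrices M with M₀₁ = M₀₂ = M₂₀ = M₂₁ = 0 (i.e., of the form with rows (a,0,0), (c,d,e), (0,0,f)) satisfying a − d = s·c and d − f = t·e. Then R is right qnil-duo if and only if H_{(s,t)}(R) is right qnil-duo. -/
/-- The subring `H_{(s,t)}(R)` of `M₃(R)`: matrices with rows `(a,0,0)`, `(c,d,e)`,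
`(0,0,f)` such that `a - d = s*c` and `d - f = t*e`, for central elements `s`, `t`. -/
def Hst (R : Type*) [Ring R] (s t : R)
    (hs : ∀ x : R, s * x = x * s) (ht : ∀ x : R, t * x = x * t) :
    Subring (Matrix (Fin 3) (Fin 3) R) where
  carrier := {M | M 0 1 = 0 ∧ M 0 2 = 0 ∧ M 2 0 = 0 ∧ M 2 1 = 0 ∧
    M 0 0 - M 1 1 = s * M 1 0 ∧ M 1 1 - M 2 2 = t * M 1 2}
  zero_mem' := by simp
  one_mem' := by simp [Matrix.one_apply]
  add_mem' := by
    rintro A B ⟨hA01, hA02, hA20, hA21, hAs, hAt⟩ ⟨hB01, hB02, hB20, hB21, hBs, hBt⟩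
    refine ⟨?_, ?_, ?_, ?_, ?_, ?_⟩ <;>
      simp only [Matrix.add_apply, hA01, hA02, hA20, hA21, hB01, hB02, hB20, hB21,
        add_zero, mul_add, ← hAs, ← hBs, ← hAt, ← hBt] <;> abel
  neg_mem' := by
    rintro A ⟨hA01, hA02, hA20, hA21, hAs, hAt⟩
    refine ⟨?_, ?_, ?_, ?_, ?_, ?_⟩ <;>
      simp only [Matrix.neg_apply, hA01, hA02, hA20, hA21, neg_zero,
        mul_neg, ← hAs, ← hAt] <;> abel
  mul_mem' := by
    rintro A B ⟨hA01, hA02, hA20, hA21, hAs, hAt⟩ ⟨hB01, hB02, hB20, hB21, hBs, hBt⟩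
    refine ⟨?_, ?_, ?_, ?_, ?_, ?_⟩ <;>
      simp only [Matrix.mul_apply, Fin.sum_univ_three, hA01, hA02, hA20, hA21,
        hB01, hB02, hB20, hB21, mul_zero, zero_mul, add_zero, zero_add]
    · calc A 0 0 * B 0 0 - A 1 1 * B 1 1
          = (A 0 0 - A 1 1) * B 0 0 + A 1 1 * (B 0 0 - B 1 1) := by noncomm_ring
        _ = s * A 1 0 * B 0 0 + A 1 1 * (s * B 1 0) := by rw [hAs, hBs]
        _ = s * (A 1 0 * B 0 0) + s * (A 1 1 * B 1 0) := by
            rw [← mul_assoc (A 1 1) s, ← hs (A 1 1), mul_assoc, mul_assoc]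
        _ = s * (A 1 0 * B 0 0 + A 1 1 * B 1 0) := by rw [mul_add]
    · calc A 1 1 * B 1 1 - A 2 2 * B 2 2
          = A 1 1 * (B 1 1 - B 2 2) + (A 1 1 - A 2 2) * B 2 2 := by noncomm_ring
        _ = A 1 1 * (t * B 1 2) + t * A 1 2 * B 2 2 := by rw [hAt, hBt]
        _ = t * (A 1 1 * B 1 2) + t * (A 1 2 * B 2 2) := by
            rw [← mul_assoc (A 1 1) t, ← ht (A 1 1), mul_assoc, mul_assoc]
        _ = t * (A 1 1 * B 1 2 + A 1 2 * B 2 2) := by rw [mul_add]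

section Aux

variable {A B : Type*} [Ring A] [Ring B]

lemma qnil_map (e : A ≃+* B) {a : A} (h : IsQuasinilpotent a) :
    IsQuasinilpotent (e a) := by
  intro x hx
  have hy : a * e.symm x = e.symm x * a := by
    apply e.injective
    simpa [map_mul] using hx
  have hu := h (e.symm x) hy
  have := hu.map (e : A →+* B)
  simpa [map_mul] using this

lemma duo_equiv (e : A ≃+* B) (h : IsRightQnilDuo A) : IsRightQnilDuo B := by
  intro a b hb
  obtain ⟨c, hc, hcb⟩ := h (e.symm a) (e.symm b) (qnil_map e.symm hb)
  refine ⟨e c, qnil_map e hc, ?_⟩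
  have := congrArg e hcb
  simpa [map_mul] using this

lemma qnil_zero : IsQuasinilpotent (0 : A) := by
  intro x _; simp

lemma qnil_pair {a : A} {b : B} (ha : IsQuasinilpotent a) (hb : IsQuasinilpotent b) :
    IsQuasinilpotent ((a, b) : A × B) := by
  intro x hx
  have h1 := ha x.1 (congrArg Prod.fst hx)
  have h2 := hb x.2 (congrArg Prod.snd hx)
  obtain ⟨u1, hu1⟩ := h1
  obtain ⟨u2, hu2⟩ := h2
  exact ⟨MulEquiv.prodUnits.symm (u1, u2), by
    ext <;> simp [MulEquiv.prodUnits, hu1, hu2]⟩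

lemma qnil_fst {p : A × B} (h : IsQuasinilpotent p) : IsQuasinilpotent p.1 := by
  intro x hx
  have := h (x, 0) (by ext <;> simp [hx])
  have := this.map (RingHom.fst A B)
  simpa using this

lemma duo_prod (hA : IsRightQnilDuo A) (hB : IsRightQnilDuo B) :
    IsRightQnilDuo (A × B) := by
  intro a b hb
  have hb1 : IsQuasinilpotent b.1 := qnil_fst hb
  have hb2 : IsQuasinilpotent b.2 := by
    have : IsQuasinilpotent (b.2, b.1) :=
      qnil_map (RingEquiv.prodComm : A × B ≃+* B × A) hb
    exact qnil_fst this
  obtain ⟨c1, hc1, h1⟩ := hA a.1 b.1 hb1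
  obtain ⟨c2, hc2, h2⟩ := hB a.2 b.2 hb2
  exact ⟨(c1, c2), qnil_pair hc1 hc2, by ext <;> simp [h1, h2]⟩

lemma duo_fst (h : IsRightQnilDuo (A × B)) : IsRightQnilDuo A := by
  intro a b hb
  obtain ⟨c, hc, hcb⟩ := h (a, 0) (b, 0) (qnil_pair hb qnil_zero)
  exact ⟨c.1, qnil_fst hc, congrArg Prod.fst hcb⟩

end Aux

/-- `H_{(s,t)}(R)` is isomorphic to `R × R × R` via the diagonal entries. -/
noncomputable def HstEquiv (R : Type*) [Ring R] (s t : R)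
    (hs : ∀ x : R, s * x = x * s) (ht : ∀ x : R, t * x = x * t)
    (hsu : IsUnit s) (htu : IsUnit t) :
    Hst R s t hs ht ≃+* R × R × R where
  toFun M := (M.1 0 0, M.1 1 1, M.1 2 2)
  invFun p := ⟨Matrix.of
      ![![p.1, 0, 0],
        ![(↑hsu.unit⁻¹ : R) * (p.1 - p.2.1), p.2.1, (↑htu.unit⁻¹ : R) * (p.2.1 - p.2.2)],
        ![0, 0, p.2.2]], by
    refine ⟨rfl, rfl, rfl, rfl, ?_, ?_⟩
    · show p.1 - p.2.1 = s * ((↑hsu.unit⁻¹ : R) * (p.1 - p.2.1))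
      rw [← mul_assoc]
      nth_rewrite 1 [← hsu.unit_spec]
      rw [Units.mul_inv, one_mul]
    · show p.2.1 - p.2.2 = t * ((↑htu.unit⁻¹ : R) * (p.2.1 - p.2.2))
      rw [← mul_assoc]
      nth_rewrite 1 [← htu.unit_spec]
      rw [Units.mul_inv, one_mul]⟩
  left_inv M := by
    obtain ⟨h01, h02, h20, h21, hds, hdt⟩ := M.2
    have h10 : (↑hsu.unit⁻¹ : R) * (M.1 0 0 - M.1 1 1) = M.1 1 0 := by
      rw [hds, ← mul_assoc]
      nth_rewrite 2 [← hsu.unit_spec]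
      rw [Units.inv_mul, one_mul]
    have h12 : (↑htu.unit⁻¹ : R) * (M.1 1 1 - M.1 2 2) = M.1 1 2 := by
      rw [hdt, ← mul_assoc]
      nth_rewrite 2 [← htu.unit_spec]
      rw [Units.inv_mul, one_mul]
    apply Subtype.ext
    ext i j
    fin_cases i <;> fin_cases j <;> simp [h01, h02, h20, h21, h10, h12]
  right_inv p := by
    ext <;> simp
  map_mul' M N := by
    obtain ⟨hM01, hM02, hM20, hM21, _, _⟩ := M.2
    obtain ⟨hN01, hN02, hN20, hN21, _, _⟩ := N.2
    have hmul : ((M * N : Hst R s t hs ht) : Matrix (Fin 3) (Fin 3) R) = M.1 * N.1 := rfl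
    refine Prod.ext ?_ (Prod.ext ?_ ?_) <;>
      simp only [hmul, Matrix.mul_apply, Fin.sum_univ_three, hM01, hM02, hM20, hM21,
        hN01, hN02, hN20, hN21, mul_zero, zero_mul, add_zero, zero_add] <;> rfl
  map_add' M N := by
    have hadd : ((M + N : Hst R s t hs ht) : Matrix (Fin 3) (Fin 3) R) = M.1 + N.1 := rfl
    refine Prod.ext ?_ (Prod.ext ?_ ?_) <;> simp [hadd]

theorem stmt19 {R : Type*} [Ring R] (s t : R)
    (hs : ∀ x : R, s * x = x * s) (ht : ∀ x : R, t * x = x * t)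
    (hsu : IsUnit s) (htu : IsUnit t) :
    IsRightQnilDuo R ↔ IsRightQnilDuo (Hst R s t hs ht) := by
  constructor
  · intro h
    exact duo_equiv (HstEquiv R s t hs ht hsu htu).symm (duo_prod h (duo_prod h h))
  · intro h
    have h3 : IsRightQnilDuo (R × R × R) := duo_equiv (HstEquiv R s t hs ht hsu htu) h
    exact duo_fst h3
end
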